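/- Let I be an admissible ideal of kQ and α an arrow of Q. If I possesses a strict α-monomial Gröbner basis (with respect to some admissible order on the set of paths of Q), then α is not a loop. Consequently, if α is a loop, then Λ/⟨ᾱ⟩ is never a strict monomial arrow removal of Λ = kQ/I. -/

import Mathlib

/-! Scaffolding: path algebras of quivers, admissible ideals, monomial arrow removal,
admissible orders and Gröbner bases, following Green. -/

open Quiver

/-- The type of all paths in a quiver `V` (with arbitrary source and target). -/
abbrev PathsIn (V : Type) [Quiver.{0} V] : Type := Σ a b : V, Quiver.Path a b

namespace PathsIn

variable {V : Type} [Quiver.{0} V]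

/-- The length of a path. -/
def len (u : PathsIn V) : ℕ := u.2.2.length

/-- `u.Divides w` : the path `u` is a subpath of (divides) the path `w`,
i.e. `w = r·u·s` for (possibly trivial) paths `r`, `s`. -/
def Divides (u w : PathsIn V) : Prop :=
  ∃ (a d : V) (r : Quiver.Path a u.1) (s : Quiver.Path u.2.1 d),
    w = ⟨a, d, (r.comp u.2.2).comp s⟩

/-- `u.ProperlyDivides w` : `u` is a proper subpath of `w`. -/
def ProperlyDivides (u w : PathsIn V) : Prop := u.Divides w ∧ u ≠ w

/-- `s.OverlapsLeftWith t` : the path `s` overlaps with the path `t` from the left,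
i.e. `t = r₁·r₂` and `s = r₂·r₃` for paths `r₁, r₂, r₃` with `r₂` non-trivial.
(Equivalently, `t` overlaps with `s` from the right.) -/
def OverlapsLeftWith (s t : PathsIn V) : Prop :=
  ∃ (x : V) (r₁ : Quiver.Path t.1 x) (r₂ : Quiver.Path x t.2.1)
    (r₃ : Quiver.Path t.2.1 s.2.1),
      0 < r₂.length ∧ t = ⟨t.1, t.2.1, r₁.comp r₂⟩ ∧ s = ⟨x, s.2.1, r₂.comp r₃⟩

end PathsIn

/-- The path of length one corresponding to an arrow. -/
def arrowPath {V : Type} [Quiver.{0} V] {a b : V} (α : a ⟶ b) : PathsIn V :=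
  ⟨a, b, α.toPath⟩

/-- A path `w` avoids the arrow `α` if `α` is not a subpath of `w`. -/
def AvoidsArrow {V : Type} [Quiver.{0} V] {a b : V} (α : a ⟶ b) (w : PathsIn V) : Prop :=
  ¬ (arrowPath α).Divides w

/-- `IsPathAlgebra k V A` : the `k`-algebra `A` is the path algebra `kQ` of the quiver `V`:
it has a `k`-basis indexed by the paths of `V`, multiplication of basis elements is given by
concatenation of composable paths (and is zero on non-composable ones), and the identity is
the sum of the trivial paths. -/
structure IsPathAlgebra (k : Type) [Field k] (V : Type) [Quiver.{0} V] [Fintype V]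
    (A : Type) [Ring A] [Algebra k A] : Type where
  basis : Module.Basis (PathsIn V) k A
  mul_matched : ∀ {a b c : V} (p : Quiver.Path a b) (q : Quiver.Path b c),
    basis ⟨a, b, p⟩ * basis ⟨b, c, q⟩ = basis ⟨a, c, p.comp q⟩
  mul_unmatched : ∀ {a b b' c : V} (p : Quiver.Path a b) (q : Quiver.Path b' c),
    b ≠ b' → basis ⟨a, b, p⟩ * basis ⟨b', c, q⟩ = 0
  one_def : (1 : A) = ∑ a : V, basis ⟨a, a, Quiver.Path.nil⟩

namespace IsPathAlgebra

variable {k : Type} [Field k] {V : Type} [Quiver.{0} V] [Fintype V]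
  {A : Type} [Ring A] [Algebra k A]

/-- The path `u` occurs in the element `z` of the path algebra (i.e. `u` has a non-zero
coefficient in `z`). -/
def OccursIn (PA : IsPathAlgebra k V A) (u : PathsIn V) (z : A) : Prop :=
  PA.basis.repr z u ≠ 0

/-- The path `u` occurs in the subset `T` of the path algebra. -/
def OccursInSet (PA : IsPathAlgebra k V A) (u : PathsIn V) (T : Set A) : Prop :=
  ∃ z ∈ T, PA.OccursIn u z

/-- An element of the path algebra avoids the arrow `α` if every path occurring in it does. -/
def ElemAvoids (PA : IsPathAlgebra k V A) {a b : V} (α : a ⟶ b) (z : A) : Prop :=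
  ∀ u : PathsIn V, PA.OccursIn u z → AvoidsArrow α u

/-- A relation: a linear combination of paths of length at least two having a common source
and a common target. -/
def IsRelation (PA : IsPathAlgebra k V A) (z : A) : Prop :=
  (∀ u : PathsIn V, PA.OccursIn u z → 2 ≤ u.len) ∧
  (∀ u v : PathsIn V, PA.OccursIn u z → PA.OccursIn v z → u.1 = v.1 ∧ u.2.1 = v.2.1)

end IsPathAlgebra

/-- The two-sided ideal of a ring generated by a subset, as a set: the additive closure of
the set of elements `r * t * s` with `t` in the generating set. -/
def ringIdealSpan {A : Type} [Ring A] (T : Set A) : Set A :=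
  (AddSubgroup.closure {y : A | ∃ r s : A, ∃ t ∈ T, y = r * t * s} : AddSubgroup A)

/-- An admissible ideal of the path algebra: a two-sided ideal `I` with `J^n ⊆ I ⊆ J²`
for some `n`, where `J` is the arrow ideal. -/
def IsAdmissibleIdeal {k : Type} [Field k] {V : Type} [Quiver.{0} V] [Fintype V]
    {A : Type} [Ring A] [Algebra k A] (PA : IsPathAlgebra k V A) (I : Set A) : Prop :=
  I = ringIdealSpan I ∧
  (∃ n : ℕ, ∀ u : PathsIn V, n ≤ u.len → PA.basis u ∈ I) ∧
  (∀ z ∈ I, ∀ u : PathsIn V, PA.OccursIn u z → 2 ≤ u.len)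

/-- A presentation of the quotient of an algebra `A` by (the set underlying) a two-sided
ideal `I`: a surjective algebra homomorphism with kernel `I`. -/
structure QuotPresentation (k : Type) [Field k] {A : Type} [Ring A] [Algebra k A]
    (I : Set A) (B : Type) [Ring B] [Algebra k B] : Type where
  proj : A →ₐ[k] B
  surj : Function.Surjective proj
  ker : ∀ z : A, proj z = 0 ↔ z ∈ I

section StrictMonomial

variable {k : Type} [Field k] {V : Type} [Quiver.{0} V] [Fintype V]
  {A : Type} [Ring A] [Algebra k A]

/-- The path `pαq`. -/
def pathPAQ {V : Type} [Quiver.{0} V] {va vb xp yq : V} (α : va ⟶ vb)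
    (p : Quiver.Path xp va) (q : Quiver.Path vb yq) : PathsIn V :=
  ⟨xp, yq, (p.comp α.toPath).comp q⟩

/-- Properties (P) for a subset `T` of the path algebra, relative to the arrow `α` and the
paths `p`, `q`:  (P1) every element of `T` other than `pαq` avoids `α`;
(P2) `p` does not overlap from the left with any path occurring in `T`;
(P2ᵒᵖ) `q` does not overlap from the right with any path occurring in `T`;
(P3) no path occurring in `T` divides `p` or `q`. -/
structure SatisfiesP (PA : IsPathAlgebra k V A) {va vb xp yq : V} (α : va ⟶ vb)
    (T : Set A) (p : Quiver.Path xp va) (q : Quiver.Path vb yq) : Prop where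
  p1 : ∀ z ∈ T, z ≠ PA.basis (pathPAQ α p q) → PA.ElemAvoids α z
  p2 : ∀ u : PathsIn V, PA.OccursInSet u T →
    ¬ PathsIn.OverlapsLeftWith ⟨xp, va, p⟩ u
  p2op : ∀ u : PathsIn V, PA.OccursInSet u T →
    ¬ PathsIn.OverlapsLeftWith u ⟨vb, yq, q⟩
  p3 : ∀ u : PathsIn V, PA.OccursInSet u T →
    ¬ u.Divides ⟨xp, va, p⟩ ∧ ¬ u.Divides ⟨vb, yq, q⟩

/-- The common context for (strict) `α`-monomial generating sets: `p`, `q` avoid `α`,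
at most one of them is trivial, and `T` is a finite generating set of relations for `I`. -/
structure IsMonGenData (PA : IsPathAlgebra k V A) {va vb xp yq : V} (α : va ⟶ vb)
    (I : Set A) (T : Set A) (p : Quiver.Path xp va) (q : Quiver.Path vb yq) : Prop where
  finite : T.Finite
  rels : ∀ t ∈ T, PA.IsRelation t
  gen : I = ringIdealSpan T
  p_avoids : AvoidsArrow α (⟨xp, va, p⟩ : PathsIn V)
  q_avoids : AvoidsArrow α (⟨vb, yq, q⟩ : PathsIn V)
  not_both_trivial : 0 < p.length ∨ 0 < q.length

/-- `T` is a strict `α`-monomial generating set for the ideal `I`, relative to the paths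
`p` and `q`. -/
structure IsStrictMonomialGenSet (PA : IsPathAlgebra k V A) {va vb xp yq : V} (α : va ⟶ vb)
    (I : Set A) (T : Set A) (p : Quiver.Path xp va) (q : Quiver.Path vb yq) : Prop where
  data : IsMonGenData PA α I T p q
  mem : PA.basis (pathPAQ α p q) ∈ T
  others_avoid : ∀ z ∈ T, z ≠ PA.basis (pathPAQ α p q) → PA.ElemAvoids α z
  no_proper_sub : ∀ u : PathsIn V, u.ProperlyDivides (pathPAQ α p q) → PA.basis u ∉ I
  no_overlap_p : ∀ u : PathsIn V, PA.OccursInSet u T →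
    ¬ PathsIn.OverlapsLeftWith ⟨xp, va, p⟩ u
  no_overlap_q : ∀ u : PathsIn V, PA.OccursInSet u T →
    ¬ PathsIn.OverlapsLeftWith u ⟨vb, yq, q⟩
  no_divide : ∀ u : PathsIn V, PA.OccursInSet u T →
    ¬ u.Divides ⟨xp, va, p⟩ ∧ ¬ u.Divides ⟨vb, yq, q⟩

/-- `T` is an `α`-monomial generating set: every element of `T` which is not (a scalar
multiple of) a path avoids `α`. -/
structure IsMonomialGenSet (PA : IsPathAlgebra k V A) {va vb : V} (α : va ⟶ vb)
    (I : Set A) (T : Set A) : Prop where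
  finite : T.Finite
  rels : ∀ t ∈ T, PA.IsRelation t
  gen : I = ringIdealSpan T
  mono : ∀ t ∈ T, (∃ (u : PathsIn V) (c : k), c ≠ 0 ∧ t = c • PA.basis u) ∨ PA.ElemAvoids α t

end StrictMonomial

section Groebner

variable {k : Type} [Field k] {V : Type} [Quiver.{0} V] [Fintype V]
  {A : Type} [Ring A] [Algebra k A]

/-- An admissible order on the set of paths of a quiver: a well-order compatible with left
and right multiplication, for which every subpath of a path precedes it. -/
structure AdmissibleOrder (V : Type) [Quiver.{0} V] : Type 1 where
  le : PathsIn V → PathsIn V → Prop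
  refl : ∀ u, le u u
  trans : ∀ u v w, le u v → le v w → le u w
  antisymm : ∀ u v, le u v → le v u → u = v
  total : ∀ u v, le u v ∨ le v u
  wf : WellFounded (fun u w => le u w ∧ u ≠ w)
  right_compat : ∀ (u w : PathsIn V), le u w → ∀ (hc : u.2.1 = w.2.1) (z : V)
    (r : Quiver.Path w.2.1 z),
      le ⟨u.1, z, u.2.2.comp (r.cast hc.symm rfl)⟩ ⟨w.1, z, w.2.2.comp r⟩
  left_compat : ∀ (u w : PathsIn V), le u w → ∀ (hc : u.1 = w.1) (z : V)
    (r : Quiver.Path z w.1),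
      le ⟨z, u.2.1, (r.cast rfl hc.symm).comp u.2.2⟩ ⟨z, w.2.1, r.comp w.2.2⟩
  subpath_le : ∀ u w, PathsIn.Divides u w → le u w

/-- `IsTip PA O z u` : the path `u` is the `O`-largest path occurring in `z`. -/
def IsTip (PA : IsPathAlgebra k V A) (O : AdmissibleOrder V) (z : A) (u : PathsIn V) : Prop :=
  PA.OccursIn u z ∧ ∀ w : PathsIn V, PA.OccursIn w z → O.le w u

/-- `G` is a Gröbner basis for the ideal `I` with respect to the admissible order `O`:
`G ⊆ I` and the tip of every non-zero element of `I` is divisible by the tip of some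
element of `G`. -/
def IsGroebnerBasis (PA : IsPathAlgebra k V A) (O : AdmissibleOrder V)
    (I : Set A) (G : Set A) : Prop :=
  G ⊆ I ∧ ∀ z ∈ I, z ≠ 0 → ∃ g ∈ G, ∃ tg tz : PathsIn V,
    IsTip PA O g tg ∧ IsTip PA O z tz ∧ tg.Divides tz

/-- A strict `α`-monomial Gröbner basis for `I`, relative to the paths `p`, `q` (which
avoid `α`, have the appropriate endpoints, and at most one of which is trivial):
`pαq ∈ 𝒢`, every other element of `𝒢` avoids `α`, and no tip of an element of `𝒢`
overlaps with `p` from the right, overlaps with `q` from the left, or divides `p` or `q`. -/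
structure IsStrictMonomialGB (PA : IsPathAlgebra k V A) (O : AdmissibleOrder V)
    {va vb xp yq : V} (α : va ⟶ vb) (I : Set A) (G : Set A)
    (p : Quiver.Path xp va) (q : Quiver.Path vb yq) : Prop where
  gb : IsGroebnerBasis PA O I G
  p_avoids : AvoidsArrow α (⟨xp, va, p⟩ : PathsIn V)
  q_avoids : AvoidsArrow α (⟨vb, yq, q⟩ : PathsIn V)
  not_both_trivial : 0 < p.length ∨ 0 < q.length
  mem : PA.basis (pathPAQ α p q) ∈ G
  others_avoid : ∀ z ∈ G, z ≠ PA.basis (pathPAQ α p q) → PA.ElemAvoids α z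
  tips_no_overlap_p : ∀ g ∈ G, ∀ u : PathsIn V, IsTip PA O g u →
    ¬ PathsIn.OverlapsLeftWith ⟨xp, va, p⟩ u
  tips_no_overlap_q : ∀ g ∈ G, ∀ u : PathsIn V, IsTip PA O g u →
    ¬ PathsIn.OverlapsLeftWith u ⟨vb, yq, q⟩
  tips_no_divide : ∀ g ∈ G, ∀ u : PathsIn V, IsTip PA O g u →
    ¬ u.Divides ⟨xp, va, p⟩ ∧ ¬ u.Divides ⟨vb, yq, q⟩

end Groebner


section Aux
variable {V : Type} [Quiver.{0} V]

/-- The n-th power of a loop as a path. -/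
def apow {va : V} (α : va ⟶ va) : ℕ → Quiver.Path va va
  | 0 => Quiver.Path.nil
  | n+1 => (apow α n).cons α

lemma apow_length {va : V} (α : va ⟶ va) : ∀ n, (apow α n).length = n
  | 0 => rfl
  | n+1 => congrArg Nat.succ (apow_length α n)

lemma pathsIn_mk_inj {a b c d : V} {p : Quiver.Path a b} {q : Quiver.Path c d}
    (h : (⟨a, b, p⟩ : PathsIn V) = ⟨c, d, q⟩) :
    ∃ (_ : a = c) (_ : b = d), HEq p q := by
  obtain ⟨rfl, h2⟩ : a = c ∧ HEq (⟨b, p⟩ : Σ b, Quiver.Path a b) (⟨d, q⟩ : Σ b, Quiver.Path c b) :=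
    Sigma.ext_iff.mp h
  obtain ⟨rfl, h3⟩ : b = d ∧ HEq p q := Sigma.ext_iff.mp (eq_of_heq h2)
  exact ⟨rfl, rfl, h3⟩

lemma divides_trans {u v w : PathsIn V} (h1 : u.Divides v) (h2 : v.Divides w) :
    u.Divides w := by
  obtain ⟨a, d, r, s, rfl⟩ := h1
  obtain ⟨a', d', r', s', rfl⟩ := h2
  exact ⟨a', d', r'.comp r, s.comp s', by simp [Quiver.Path.comp_assoc]⟩

/-- Key structural lemma: any positive-length subpath of a power of a loop contains it. -/
lemma pow_decomp {va : V} (α : va ⟶ va) :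
    ∀ (n : ℕ) {x y : V} (r : Quiver.Path va x) (m : Quiver.Path x y) (s : Quiver.Path y va),
      (r.comp m).comp s = apow α n → 0 < m.length → (arrowPath α).Divides ⟨x, y, m⟩ := by
  intro n
  induction n with
  | zero =>
    intro x y r m s h hl
    have := congrArg Quiver.Path.length h
    simp [Quiver.Path.length_comp, apow] at this
    omega
  | succ n ih =>
    intro x y r m s h hl
    cases s with
    | nil =>
      rw [Quiver.Path.comp_nil] at h
      cases m with
      | nil => simp at hl
      | cons m' e =>
        rw [Quiver.Path.comp_cons] at h
        obtain rfl := Quiver.Path.obj_eq_of_cons_eq_cons h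
        obtain rfl : e = α := eq_of_heq (Quiver.Path.hom_heq_of_cons_eq_cons h)
        exact ⟨x, _, m', Quiver.Path.nil, by simp [arrowPath, Quiver.Hom.toPath]⟩
    | cons s' f =>
      rw [Quiver.Path.comp_cons] at h
      obtain rfl := Quiver.Path.obj_eq_of_cons_eq_cons h
      have h' : (r.comp m).comp s' = apow α n :=
        eq_of_heq (Quiver.Path.heq_of_cons_eq_cons h)
      exact ih r m s' h' hl

lemma divides_apow {va : V} (α : va ⟶ va) {n : ℕ} {u : PathsIn V}
    (h : u.Divides ⟨va, va, apow α n⟩) (hl : 0 < u.len) : (arrowPath α).Divides u := by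
  obtain ⟨a, d, r, s, heq⟩ := h
  obtain ⟨ha, hd, hp⟩ := pathsIn_mk_inj heq
  subst ha; subst hd
  exact pow_decomp α n r u.2.2 s (eq_of_heq hp).symm hl

end Aux
section Aux2
variable {k : Type} [Field k] {V : Type} [Quiver.{0} V] [Fintype V]
  {A : Type} [Ring A] [Algebra k A]

lemma occursIn_basis_iff (PA : IsPathAlgebra k V A) {u w : PathsIn V} :
    PA.OccursIn u (PA.basis w) ↔ u = w := by
  rw [IsPathAlgebra.OccursIn, Module.Basis.repr_self]
  rcases eq_or_ne u w with rfl | hne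
  · simp
  · simp [Finsupp.single_apply_eq_zero, hne, Ne.symm hne]

lemma tip_basis_eq (PA : IsPathAlgebra k V A) (O : AdmissibleOrder V) {u w : PathsIn V}
    (h : IsTip PA O (PA.basis w) u) : u = w :=
  (occursIn_basis_iff PA).mp h.1

lemma occursIn_smul (PA : IsPathAlgebra k V A) {u : PathsIn V} {c : k} {z : A}
    (h : PA.OccursIn u (c • z)) : PA.OccursIn u z := by
  simp only [IsPathAlgebra.OccursIn, map_smul] at h ⊢
  intro h0; rw [Finsupp.smul_apply, h0, smul_zero] at h; exact h rfl

lemma occursIn_sum (PA : IsPathAlgebra k V A) {u : PathsIn V} {ι : Type*} {s : Finset ι}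
    {f : ι → A} (h : PA.OccursIn u (∑ i ∈ s, f i)) : ∃ i ∈ s, PA.OccursIn u (f i) := by
  simp only [IsPathAlgebra.OccursIn, map_sum] at h
  rw [Finsupp.finset_sum_apply] at h
  obtain ⟨i, hi, hne⟩ := Finset.exists_ne_zero_of_sum_ne_zero h
  exact ⟨i, hi, hne⟩

/-- decompose an element as a sum over its support paths -/
lemma elem_eq_sum (PA : IsPathAlgebra k V A) (x : A) :
    x = ∑ w ∈ (PA.basis.repr x).support, (PA.basis.repr x) w • PA.basis w := by
  conv_lhs => rw [← PA.basis.linearCombination_repr x]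
  rw [Finsupp.linearCombination_apply, Finsupp.sum]

lemma occurs_mul_basis_basis (PA : IsPathAlgebra k V A) {u w v : PathsIn V}
    (h : PA.OccursIn u (PA.basis w * PA.basis v)) :
    ∃ (hc : w.2.1 = v.1), u = ⟨w.1, v.2.1, (w.2.2.comp (v.2.2.cast hc.symm rfl))⟩ := by
  obtain ⟨a, b, pw⟩ := w
  obtain ⟨b', c, pv⟩ := v
  by_cases hb : b = b'
  · subst hb
    rw [PA.mul_matched] at h
    exact ⟨rfl, (occursIn_basis_iff PA).mp h⟩
  · rw [PA.mul_unmatched pw pv hb] at h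
    simp [IsPathAlgebra.OccursIn] at h

lemma occurs_mul_left (PA : IsPathAlgebra k V A) {u : PathsIn V} {x t : A}
    (h : PA.OccursIn u (x * t)) :
    ∃ v : PathsIn V, PA.OccursIn v t ∧
      ∃ (a : V) (r : Quiver.Path a v.1), u = ⟨a, v.2.1, r.comp v.2.2⟩ := by
  rw [elem_eq_sum PA x, Finset.sum_mul] at h
  obtain ⟨w, -, hw⟩ := occursIn_sum PA h
  rw [smul_mul_assoc] at hw
  replace hw := occursIn_smul PA hw
  rw [elem_eq_sum PA t, Finset.mul_sum] at hw
  obtain ⟨v, hv, hv2⟩ := occursIn_sum PA hw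
  rw [mul_smul_comm] at hv2
  replace hv2 := occursIn_smul PA hv2
  obtain ⟨hc, rfl⟩ := occurs_mul_basis_basis PA hv2
  refine ⟨v, Finsupp.mem_support_iff.mp hv, w.1, w.2.2.comp (Quiver.Path.nil.cast rfl hc), ?_⟩
  obtain ⟨a, b, pw⟩ := w
  obtain ⟨b', c, pv⟩ := v
  cases hc
  simp [Quiver.Path.comp_assoc]

lemma occurs_mul_right (PA : IsPathAlgebra k V A) {u : PathsIn V} {t s : A}
    (h : PA.OccursIn u (t * s)) :
    ∃ v : PathsIn V, PA.OccursIn v t ∧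
      ∃ (d : V) (r : Quiver.Path v.2.1 d), u = ⟨v.1, d, v.2.2.comp r⟩ := by
  rw [elem_eq_sum PA s, Finset.mul_sum] at h
  obtain ⟨w, -, hw⟩ := occursIn_sum PA h
  rw [mul_smul_comm] at hw
  replace hw := occursIn_smul PA hw
  rw [elem_eq_sum PA t, Finset.sum_mul] at hw
  obtain ⟨v, hv, hv2⟩ := occursIn_sum PA hw
  rw [smul_mul_assoc] at hv2
  replace hv2 := occursIn_smul PA hv2
  obtain ⟨hc, rfl⟩ := occurs_mul_basis_basis PA hv2
  refine ⟨v, Finsupp.mem_support_iff.mp hv, w.2.1, w.2.2.cast hc.symm rfl, rfl⟩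

lemma occurs_mul_mul (PA : IsPathAlgebra k V A) {u : PathsIn V} {r t s : A}
    (h : PA.OccursIn u (r * t * s)) :
    ∃ v : PathsIn V, PA.OccursIn v t ∧ v.Divides u := by
  obtain ⟨v', hv', d, s', rfl⟩ := occurs_mul_right PA h
  obtain ⟨v, hv, a, r', rfl⟩ := occurs_mul_left PA hv'
  exact ⟨v, hv, a, d, r', s', rfl⟩

lemma mem_closure_occurs (PA : IsPathAlgebra k V A) {S : Set A} {z : A}
    (hz : z ∈ (AddSubgroup.closure S : AddSubgroup A)) {u : PathsIn V}
    (hu : PA.OccursIn u z) : ∃ y ∈ S, PA.OccursIn u y := by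
  by_contra hcon
  push_neg at hcon
  have hker : S ⊆ (AddSubgroup.comap
      (((Finsupp.applyAddHom u : (PathsIn V →₀ k) →+ k)).comp
        (PA.basis.repr : A ≃ₗ[k] (PathsIn V →₀ k)).toLinearMap.toAddMonoidHom) ⊥ : AddSubgroup A) := by
    intro y hy
    simpa [AddSubgroup.mem_comap, IsPathAlgebra.OccursIn] using hcon y hy
  have := (AddSubgroup.closure_le _).mpr hker hz
  simp [AddSubgroup.mem_comap] at this
  exact hu this

end Aux2
section Aux3
variable {V : Type} [Quiver.{0} V]

lemma paq_contradiction {va xp yq : V} (α : va ⟶ va) (p : Quiver.Path xp va)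
    (q : Quiver.Path va yq)
    (hp : AvoidsArrow α (⟨xp, va, p⟩ : PathsIn V))
    (hq : AvoidsArrow α (⟨va, yq, q⟩ : PathsIn V))
    (hnt : 0 < p.length ∨ 0 < q.length) {n : ℕ}
    (hdiv : (pathPAQ α p q).Divides ⟨va, va, apow α n⟩) : False := by
  have hpd : PathsIn.Divides (⟨xp, va, p⟩ : PathsIn V) (pathPAQ α p q) :=
    ⟨xp, yq, Quiver.Path.nil, α.toPath.comp q, by
      simp only [pathPAQ, Quiver.Path.nil_comp, Quiver.Path.comp_assoc]⟩
  have hqd : PathsIn.Divides (⟨va, yq, q⟩ : PathsIn V) (pathPAQ α p q) :=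
    ⟨xp, yq, p.comp α.toPath, Quiver.Path.nil, by
      simp [pathPAQ, Quiver.Path.comp_assoc]⟩
  rcases hnt with h | h
  · exact hp (divides_apow α (divides_trans hpd hdiv) h)
  · exact hq (divides_apow α (divides_trans hqd hdiv) h)

end Aux3

/-- if the admissible ideal `I` of `kQ` possesses a strict `α`-monomial Gröbner
basis with respect to some admissible order, then `α` is not a loop.  Consequently, if `α`
is a loop, then `Λ/⟨ᾱ⟩` is never a strict monomial arrow removal of `Λ = kQ/I` (i.e. `I`
possesses no strict `α`-monomial generating set). -/
theorem not_loop_of_strict_monomial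
    {k : Type} [Field k] {V : Type} [Quiver.{0} V] [Fintype V]
    [∀ a b : V, Fintype (a ⟶ b)]
    {A : Type} [Ring A] [Algebra k A] (PA : IsPathAlgebra k V A)
    (I : Set A) (hI : IsAdmissibleIdeal PA I)
    {va vb : V} (α : va ⟶ vb) :
    ((∃ (O : AdmissibleOrder V) (xp yq : V) (p : Quiver.Path xp va)
        (q : Quiver.Path vb yq) (G : Set A), IsStrictMonomialGB PA O α I G p q) →
      va ≠ vb) ∧
    (va = vb → ∀ (xp yq : V) (p : Quiver.Path xp va) (q : Quiver.Path vb yq)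
      (T : Set A), ¬ IsStrictMonomialGenSet PA α I T p q) := by
  obtain ⟨-, ⟨N, hN⟩, hlen2⟩ := hI
  constructor
  · rintro ⟨O, xp, yq, p, q, G, h⟩ hvab
    subst hvab
    have hzI : PA.basis (⟨va, va, apow α N⟩ : PathsIn V) ∈ I :=
      hN _ (le_of_eq (apow_length α N).symm)
    obtain ⟨g, hgG, tg, tz, htg, htz, hdiv⟩ := h.gb.2 _ hzI (PA.basis.ne_zero _)
    obtain rfl : tz = (⟨va, va, apow α N⟩ : PathsIn V) := tip_basis_eq PA O htz
    have hg2 : 2 ≤ tg.len := hlen2 g (h.gb.1 hgG) tg htg.1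
    have hα : (arrowPath α).Divides tg := divides_apow α hdiv (by omega)
    have hgne : g = PA.basis (pathPAQ α p q) := by
      by_contra hne
      exact (h.others_avoid g hgG hne tg htg.1) hα
    have htgeq : tg = pathPAQ α p q := tip_basis_eq PA O (hgne ▸ htg)
    exact absurd (htgeq ▸ hdiv)
      (fun hd => paq_contradiction α p q h.p_avoids h.q_avoids h.not_both_trivial hd)
  · intro hvab xp yq p q T hT
    subst hvab
    have hzI : PA.basis (⟨va, va, apow α N⟩ : PathsIn V) ∈ I :=
      hN _ (le_of_eq (apow_length α N).symm)
    rw [hT.data.gen] at hzI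
    have hu : PA.OccursIn (⟨va, va, apow α N⟩ : PathsIn V)
        (PA.basis (⟨va, va, apow α N⟩ : PathsIn V)) := (occursIn_basis_iff PA).mpr rfl
    obtain ⟨y, hyS, hyu⟩ := mem_closure_occurs PA hzI hu
    obtain ⟨r, s, t, htT, rfl⟩ := hyS
    obtain ⟨v, hvt, hvdiv⟩ := occurs_mul_mul PA hyu
    have hv2 : 2 ≤ v.len := ((hT.data.rels t htT).1 v hvt)
    have hα : (arrowPath α).Divides v := divides_apow α hvdiv (by omega)
    have ht : t = PA.basis (pathPAQ α p q) := by
      by_contra hne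
      exact (hT.others_avoid t htT hne v hvt) hα
    have hveq : v = pathPAQ α p q := (occursIn_basis_iff PA).mp (ht ▸ hvt)
    exact paq_contradiction α p q hT.data.p_avoids hT.data.q_avoids
      hT.data.not_both_trivial (hveq ▸ hvdiv)
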